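/- Let q be a prime power, let m > 1 be an integer with smallest prime divisor m₁, and let k be an integer not divisible by m. Then for every α ∈ 𝓕_m(q), the elements α − σ^k(α), α² − σ^k(α²), …, α^{m₁−1} − σ^k(α^{m₁−1}) of F_{q^m} are linearly independent over F_q. -/

import Mathlib

open Polynomial

/-- `Fcal q m` is the set `𝓕_m(q)` of elements generating `𝔽_{q^m}` over `𝔽_q`. -/
def Fcal (q m : ℕ) {K : Type*} [Monoid K] : Set K :=
  {α | α ^ q ^ m = α ∧ ∀ l : ℕ, 0 < l → α ^ q ^ l = α → m ∣ l}

section aux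

variable {R A : Type*} [CommSemiring R] [Semiring A] [Algebra R A]

theorem fixed_pow_aux (f : A ≃ₐ[R] A) (x : A) (hfx : f x = x) :
    ∀ j : ℕ, (f ^ j) x = x := by
  intro j
  induction j with
  | zero => simp
  | succ j ih => rw [pow_succ, AlgEquiv.mul_apply, hfx, ih]

theorem fixed_zpow_aux (f : A ≃ₐ[R] A) (x : A) (hfx : f x = x) :
    ∀ n : ℤ, (f ^ n) x = x := by
  intro n
  rcases n with j | j
  · simpa using fixed_pow_aux f x hfx j
  · rw [zpow_negSucc]
    have h1 := fixed_pow_aux f x hfx (j + 1)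
    apply (f ^ (j + 1)).injective
    show (f ^ (j + 1)) (((f ^ (j + 1)).symm) x) = _
    rw [AlgEquiv.apply_symm_apply, h1]

end aux

/-- If `m > 1` has smallest prime divisor `m₁`, `k` is an integer not divisible by `m`,
and `α ∈ 𝓕_m(q)`, then `α - σ^k(α), α² - σ^k(α²), …, α^{m₁-1} - σ^k(α^{m₁-1})` are
linearly independent over `𝔽_q`. -/
theorem stmt_6 {F : Type*} [Field F] [Fintype F] (q : ℕ) (hq : Fintype.card F = q)
    (σ : AlgebraicClosure F ≃ₐ[F] AlgebraicClosure F) (hσ : ∀ x, σ x = x ^ q)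
    (m m₁ : ℕ) (hm : 1 < m) (hm₁ : m₁ = m.minFac)
    (k : ℤ) (hk : ¬ ((m : ℤ) ∣ k))
    (α : AlgebraicClosure F) (hα : α ∈ (Fcal q m : Set (AlgebraicClosure F))) :
    LinearIndependent F
      (fun i : Fin (m₁ - 1) =>
        α ^ ((i : ℕ) + 1) - (σ ^ k) (α ^ ((i : ℕ) + 1))) := by
  classical
  obtain ⟨hα1, hα2⟩ := hα
  -- `σ ^ n` is the `q ^ n`-power map
  have hσn : ∀ (n : ℕ) (x : AlgebraicClosure F), (σ ^ n) x = x ^ q ^ n := by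
    intro n
    induction n with
    | zero => simp
    | succ n ih =>
      intro x
      rw [pow_succ σ n, AlgEquiv.mul_apply, ih, hσ, ← pow_mul, ← pow_succ']
  rw [Fintype.linearIndependent_iff]
  intro g h
  by_contra hg
  push_neg at hg
  obtain ⟨i₀, hi₀⟩ := hg
  -- the polynomial `P = ∑ g i • X^(i+1)`
  set P : F[X] := ∑ i : Fin (m₁ - 1), C (g i) * X ^ ((i : ℕ) + 1) with hP
  have hβP : (aeval α) P = ∑ i : Fin (m₁ - 1), g i • α ^ ((i : ℕ) + 1) := by
    rw [hP, map_sum]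
    refine Finset.sum_congr rfl fun i _ => ?_
    rw [map_mul, aeval_C, map_pow, aeval_X, Algebra.smul_def]
  set β : AlgebraicClosure F := (aeval α) P with hβ
  -- `σ ^ k` fixes `β`
  have hkβ : (σ ^ k) β = β := by
    have h1 : ∑ i : Fin (m₁ - 1), (g i • α ^ ((i : ℕ) + 1)
        - g i • (σ ^ k) (α ^ ((i : ℕ) + 1))) = 0 := by
      simpa [smul_sub] using h
    rw [Finset.sum_sub_distrib, sub_eq_zero] at h1
    have h2 : ∑ i : Fin (m₁ - 1), g i • (σ ^ k) (α ^ ((i : ℕ) + 1))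
        = (σ ^ k) β := by
      rw [hβP, map_sum]
      exact Finset.sum_congr rfl fun i _ => (map_smul _ _ _).symm
    rw [h2] at h1
    exact h1.symm.trans hβP.symm
  -- `σ ^ m` fixes `β`
  have hmβ : (σ ^ m) β = β := by
    rw [hβ, ← Polynomial.aeval_algHom_apply (σ ^ m : AlgebraicClosure F ≃ₐ[F] AlgebraicClosure F)]
    rw [hσn m α, hα1]
  -- hence `σ ^ gcd(m, k)` fixes `β`
  set d : ℕ := Int.gcd (m : ℤ) k with hd
  have hdβ' : (σ ^ (d : ℤ)) β = β := by
    have hbez : ((d : ℤ) : ℤ) = (m : ℤ) * Int.gcdA (m : ℤ) k + k * Int.gcdB (m : ℤ) k :=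
      Int.gcd_eq_gcd_ab (m : ℤ) k
    rw [hbez, zpow_add, AlgEquiv.mul_apply, zpow_mul, zpow_mul]
    rw [fixed_zpow_aux _ _ hkβ]
    have hmβ' : (σ ^ ((m : ℤ))) β = β := by rw [zpow_natCast]; exact hmβ
    exact fixed_zpow_aux _ _ hmβ' _
  have hdβ : (σ ^ d) β = β := by rw [← zpow_natCast σ d]; exact hdβ'
  -- facts about `d`
  have hd0 : 0 < d :=
    Int.gcd_pos_of_ne_zero_left k (by exact_mod_cast (by omega : m ≠ 0))
  have hdm : d ∣ m := by
    have := Int.gcd_dvd_left (a := (m : ℤ)) (b := k)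
    exact_mod_cast this
  have hdk : (d : ℤ) ∣ k := Int.gcd_dvd_right _ _
  have hdlt : d < m := by
    rcases lt_or_eq_of_le (Nat.le_of_dvd (by omega) hdm) with h1 | h1
    · exact h1
    · exact absurd (h1 ▸ hdk) hk
  set e : ℕ := m / d with he
  have hed : e * d = m := Nat.div_mul_cancel hdm
  have he1 : 1 < e := by
    rcases Nat.lt_or_ge e 2 with h1 | h1
    · interval_cases e <;> omega
    · exact h1
  have hee : e ∣ m := Nat.div_dvd_of_dvd hdm
  have hm₁e : m₁ ≤ e := hm₁ ▸ Nat.minFac_le_of_dvd he1 hee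
  have hm₁2 : 2 ≤ m₁ := hm₁ ▸ (Nat.minFac_prime (by omega)).two_le
  -- the polynomial `Q` over the algebraic closure
  set Q : Polynomial (AlgebraicClosure F) :=
    P.map (algebraMap F (AlgebraicClosure F)) - C β with hQ
  -- degree bound
  have hPdeg : P.natDegree ≤ m₁ - 1 := by
    rw [hP]
    refine Polynomial.natDegree_sum_le_of_forall_le _ _ fun i _ => ?_
    refine le_trans (natDegree_C_mul_le _ _) ?_
    rw [natDegree_X_pow]
    omega
  have hQdeg : Q.natDegree ≤ m₁ - 1 := by
    refine le_trans (natDegree_sub_le _ _) ?_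
    rw [natDegree_C]
    simp only [max_le_iff]
    exact ⟨le_trans natDegree_map_le hPdeg, by omega⟩
  -- `Q ≠ 0`
  have hPc : P.coeff ((i₀ : ℕ) + 1) = g i₀ := by
    rw [hP, Polynomial.finset_sum_coeff]
    rw [Finset.sum_eq_single i₀]
    · simp [coeff_C_mul, coeff_X_pow]
    · intro b _ hb
      simp only [coeff_C_mul, coeff_X_pow, mul_ite, mul_one, mul_zero]
      rw [if_neg]
      intro hc
      exact hb (Fin.ext (by omega))
    · intro hmem
      exact absurd (Finset.mem_univ i₀) hmem
  have hQ0 : Q ≠ 0 := by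
    intro h0
    have : Q.coeff ((i₀ : ℕ) + 1) = 0 := by rw [h0]; simp
    rw [hQ, coeff_sub, coeff_map, hPc, coeff_C, if_neg (by omega)] at this
    rw [sub_zero] at this
    exact hi₀ ((algebraMap F (AlgebraicClosure F)).injective (by simpa using this))
  -- the roots `α ^ (q ^ (j * d))`, `j < e`
  set f : ℕ → AlgebraicClosure F := fun j => α ^ q ^ (j * d) with hf
  have hroot : ∀ j, Q.IsRoot (f j) := by
    intro j
    have h1 : f j = (σ ^ (j * d)) α := by rw [hσn]
    have h2 : (aeval (f j)) P = β := by
      rw [h1, Polynomial.aeval_algHom_apply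
        (σ ^ (j * d) : AlgebraicClosure F ≃ₐ[F] AlgebraicClosure F) α P, ← hβ]
      rw [mul_comm j d, pow_mul]
      exact fixed_pow_aux _ _ hdβ j
    show Q.eval (f j) = 0
    rw [hQ, eval_sub, eval_C, eval_map, ← aeval_def, h2, sub_self]
  -- the roots are pairwise distinct
  have hne : ∀ a b : ℕ, a < b → b < e → f a ≠ f b := by
    intro a b hab hbe hfab
    set t : ℕ := b - a with ht
    have htb : a + t = b := by omega
    have h1 : (σ ^ (a * d)) α = (σ ^ (b * d)) α := by
      rw [hσn, hσn]; exact hfab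
    have h2 : (σ ^ (b * d)) α = (σ ^ (a * d)) ((σ ^ (t * d)) α) := by
      rw [← AlgEquiv.mul_apply, ← pow_add, ← add_mul, htb]
    rw [h2] at h1
    have h3 : α = (σ ^ (t * d)) α := (σ ^ (a * d)).injective h1
    rw [hσn] at h3
    have h4 : m ∣ t * d := hα2 (t * d) (Nat.mul_pos (by omega) hd0) h3.symm
    have h5 : t * d < m := by
      calc t * d < e * d := (Nat.mul_lt_mul_right hd0).mpr (by omega)
        _ = m := hed
    have h6 : 0 < t * d := Nat.mul_pos (by omega) hd0
    have := Nat.le_of_dvd h6 h4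
    omega
  -- put the roots in a finset
  set Z : Finset (AlgebraicClosure F) := (Finset.range e).image f with hZ
  have hZcard : Z.card = e := by
    rw [hZ, Finset.card_image_of_injOn, Finset.card_range]
    intro a ha b hb hfab
    simp only [Finset.coe_range, Set.mem_Iio] at ha hb
    rcases lt_trichotomy a b with h | h | h
    · exact absurd hfab (hne a b h hb)
    · exact h
    · exact absurd hfab.symm (hne b a h ha)
  have hZsub : Z.val ⊆ Q.roots := by
    intro x hx
    rw [Finset.mem_val, hZ, Finset.mem_image] at hx
    obtain ⟨j, _, rfl⟩ := hx
    rw [Polynomial.mem_roots hQ0]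
    exact hroot j
  have hfinal : e ≤ Q.natDegree := hZcard ▸ Polynomial.card_le_degree_of_subset_roots hZsub
  omega
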